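/- Let m be a squarefree integer, c ≥ 2 an integer, and a, b integers with gcd(a,b,c) = 1 and c ∤ (a² − m b²). Then there exist an integer q and an integer r with 0 < |r| ≤ c/2 such that, setting ξ = (a + b√m)/c, γ = a − b√m, δ = q, one has ξγ − δ = r/c, and hence 0 < |N(ξγ − δ)| < 1. -/

import Mathlib

/-- With ξ = (a + b√m)/c, γ = a − b√m, δ = q, one has ξγ − δ = r/c, of norm (r/c)². -/
theorem dh_nondvd_case (m : ℤ) (hm : Squarefree m) (a b c : ℤ) (hc : 2 ≤ c)
    (hgcd : Int.gcd (Int.gcd a b) c = 1)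
    (hndvd : ¬ c ∣ (a ^ 2 - m * b ^ 2)) :
    ∃ q r : ℤ, a ^ 2 - m * b ^ 2 = c * q + r ∧ 0 < |r| ∧ 2 * |r| ≤ c ∧
      ((a ^ 2 - m * b ^ 2 : ℤ) / (c : ℚ) - (q : ℚ)) = (r : ℚ) / c ∧
      0 < |((r : ℚ) / c) ^ 2| ∧ |((r : ℚ) / c) ^ 2| < 1 := by
  set n : ℤ := a ^ 2 - m * b ^ 2 with hn
  have hcpos : (0 : ℤ) < c := by omega
  have hcn : (0 : ℕ) < c.toNat := by omega
  set r : ℤ := n.bmod c.toNat with hr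
  have hcc : ((c.toNat : ℤ)) = c := Int.toNat_of_nonneg (by omega)
  have h1 := Int.le_bmod (x := n) hcn
  have h2 := Int.bmod_lt (x := n) hcn
  rw [hcc] at h1 h2
  have hdvd : c ∣ n - r := by
    have := Int.emod_emod_of_dvd n (dvd_refl c)
    have hmod : c ∣ n - n % c := Int.dvd_self_sub_of_emod_eq rfl
    rw [hr, Int.bmod_def, hcc]
    split
    · exact hmod
    · have : n - (n % c - c) = (n - n % c) + c := by ring
      rw [this]; exact dvd_add hmod (dvd_refl c)
  obtain ⟨q, hq⟩ := hdvd
  have hnq : n = c * q + r := by omega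
  have hrne : r ≠ 0 := by
    intro h0
    exact hndvd ⟨q, by omega⟩
  have habs : 0 < |r| ∧ 2 * |r| ≤ c := by
    constructor
    · exact abs_pos.mpr hrne
    · rcases abs_cases r with ⟨h, _⟩ | ⟨h, _⟩ <;> omega
  refine ⟨q, r, hnq, habs.1, habs.2, ?_, ?_, ?_⟩
  · have hcq : (c : ℚ) ≠ 0 := by positivity
    rw [hnq]; push_cast; field_simp; ring
  · have : (r : ℚ) / c ≠ 0 := by
      apply div_ne_zero
      · exact_mod_cast hrne
      · positivity
    positivity
  · have hrlt : |r| < c := by omega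
    have hrc : |(r : ℚ) / c| < 1 := by
      rw [abs_div, div_lt_one (by positivity)]
      have : (|r| : ℚ) < c := by exact_mod_cast hrlt
      simpa [abs_of_pos (show (0:ℚ) < c by positivity)] using this
    calc |((r : ℚ) / c) ^ 2| = |(r : ℚ) / c| ^ 2 := by rw [abs_pow]
    _ < 1 := by nlinarith [abs_nonneg ((r:ℚ)/c)]
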